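/- Let f : E → ℝ be a differentiable, λ-strongly convex and L-smooth function on a finite-dimensional real inner product space E, with 0 < λ ≤ L, and let x* be a point with ∇f(x*) = 0. If 0 < η < 1/L, then for every x ∈ E, one gradient-descent step contracts the distance to x*: ‖x − η∇f(x) − x*‖ ≤ (1 − ηλ)‖x − x*‖. -/

import Mathlib

open InnerProductSpace

section Aux

variable {E : Type*} [NormedAddCommGroup E] [InnerProductSpace ℝ E] [FiniteDimensional ℝ E]

private lemma gd_line_hasDerivAt (f : E → ℝ) (hdiff : Differentiable ℝ f) (x d : E) (t : ℝ) :
    HasDerivAt (fun s : ℝ => f (x + s • d)) (inner ℝ (gradient f (x + t • d)) d : ℝ) t := by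
  have h1 : HasDerivAt (fun s : ℝ => x + s • d) d t := by
    simpa using ((hasDerivAt_id t).smul_const d).const_add x
  have h2 := ((hdiff (x + t • d)).hasGradientAt).hasFDerivAt
  have := h2.comp_hasDerivAt t h1
  simpa [toDual_apply_apply, Function.comp_def] using this

private lemma gd_descent_lemma (f : E → ℝ) (L : ℝ) (hdiff : Differentiable ℝ f)
    (hsmooth : ∀ x y : E, ‖gradient f x - gradient f y‖ ≤ L * ‖x - y‖) (x y : E) :
    f y ≤ f x + inner ℝ (gradient f x) (y - x) + (L / 2) * ‖y - x‖ ^ 2 := by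
  set d := y - x with hd
  have hgradcont : Continuous (gradient f) := by
    have : LipschitzWith (Real.toNNReal L) (gradient f) := by
      apply LipschitzWith.of_dist_le_mul
      intro a b
      rw [dist_eq_norm, dist_eq_norm]
      calc ‖gradient f a - gradient f b‖ ≤ L * ‖a - b‖ := hsmooth a b
        _ ≤ Real.toNNReal L * ‖a - b‖ := by
            gcongr; exact Real.le_coe_toNNReal L
    exact this.continuous
  have hcont : Continuous fun t : ℝ => (inner ℝ (gradient f (x + t • d)) d : ℝ) := by
    apply Continuous.inner
    · exact hgradcont.comp (by continuity)
    · exact continuous_const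
  have hftc : (∫ t in (0:ℝ)..1, (inner ℝ (gradient f (x + t • d)) d : ℝ))
      = f (x + (1:ℝ) • d) - f (x + (0:ℝ) • d) := by
    apply intervalIntegral.integral_eq_sub_of_hasDerivAt (f := fun s : ℝ => f (x + s • d))
    · intro t _
      exact gd_line_hasDerivAt f hdiff x d t
    · exact (hcont.intervalIntegrable 0 1)
  have key : (∫ t in (0:ℝ)..1, (inner ℝ (gradient f (x + t • d)) d : ℝ))
      ≤ (∫ t in (0:ℝ)..1, (inner ℝ (gradient f x) d + (L * ‖d‖ ^ 2) * t : ℝ)) := by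
    apply intervalIntegral.integral_mono_on (by norm_num)
    · exact hcont.intervalIntegrable 0 1
    · apply Continuous.intervalIntegrable; continuity
    · intro t ht
      have h1 : (inner ℝ (gradient f (x + t • d)) d : ℝ) - inner ℝ (gradient f x) d
          = inner ℝ (gradient f (x + t • d) - gradient f x) d := by
        rw [inner_sub_left]
      have h2 : (inner ℝ (gradient f (x + t • d) - gradient f x) d : ℝ)
          ≤ ‖gradient f (x + t • d) - gradient f x‖ * ‖d‖ := real_inner_le_norm _ _
      have h3 : ‖gradient f (x + t • d) - gradient f x‖ ≤ L * ‖t • d‖ := by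
        simpa using hsmooth (x + t • d) x
      have h4 : ‖t • d‖ = t * ‖d‖ := by
        rw [norm_smul, Real.norm_eq_abs, abs_of_nonneg ht.1]
      rw [h4] at h3
      nlinarith [mul_le_mul_of_nonneg_right h3 (norm_nonneg d)]
  have hints : (∫ t in (0:ℝ)..1, (inner ℝ (gradient f x) d + (L * ‖d‖ ^ 2) * t : ℝ))
      = inner ℝ (gradient f x) d + L / 2 * ‖d‖ ^ 2 := by
    rw [intervalIntegral.integral_add (by apply Continuous.intervalIntegrable; continuity)
      (by apply Continuous.intervalIntegrable; continuity)]
    rw [intervalIntegral.integral_const, intervalIntegral.integral_const_mul,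
      integral_id]
    simp
    ring
  have : f y - f x ≤ inner ℝ (gradient f x) d + L / 2 * ‖d‖ ^ 2 := by
    rw [show f y - f x = f (x + (1:ℝ) • d) - f (x + (0:ℝ) • d) by simp [hd]]
    rw [← hftc]
    linarith [le_trans key (le_of_eq hints)]
  linarith

/-- Co-coercivity from a linear lower bound and a quadratic upper bound. -/
private lemma gd_cocoercive (φ : E → ℝ) (G : E → E) (M : ℝ) (hM : 0 < M)
    (hlow : ∀ x y : E, φ x + inner ℝ (G x) (y - x) ≤ φ y)
    (hup : ∀ x y : E, φ y ≤ φ x + inner ℝ (G x) (y - x) + M / 2 * ‖y - x‖ ^ 2) :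
    ∀ x y : E, ‖G x - G y‖ ^ 2 ≤ M * inner ℝ (G x - G y) (x - y) := by
  set c := M⁻¹ with hc
  have hc0 : 0 < c := inv_pos.mpr hM
  have hMc : M * c = 1 := mul_inv_cancel₀ hM.ne'
  have claim : ∀ x y : E,
      φ x + inner ℝ (G x) (y - x) + c / 2 * ‖G y - G x‖ ^ 2 ≤ φ y := by
    intro x y
    set u := G y - G x with hu
    set z := y - c • u with hz
    have e1 : (inner ℝ (G x) (z - x) : ℝ) = inner ℝ (G x) (y - x) - c * inner ℝ (G x) u := by
      rw [hz, show y - c • u - x = (y - x) - c • u by abel, inner_sub_right,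
        real_inner_smul_right]
    have e2 : z - y = -(c • u) := by rw [hz]; abel
    have e3 : (inner ℝ (G y) (z - y) : ℝ) = -(c * inner ℝ (G y) u) := by
      rw [e2, inner_neg_right, real_inner_smul_right]
    have e4 : ‖z - y‖ ^ 2 = c ^ 2 * ‖u‖ ^ 2 := by
      rw [e2, norm_neg, norm_smul, Real.norm_eq_abs, abs_of_pos hc0, mul_pow]
    have e5 : (inner ℝ (G y) u : ℝ) - inner ℝ (G x) u = ‖u‖ ^ 2 := by
      rw [← inner_sub_left, ← hu, real_inner_self_eq_norm_sq]
    have l1 := hlow x z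
    have l2 := hup y z
    rw [e1] at l1
    rw [e3, e4] at l2
    have hMc2 : M * c ^ 2 = c := by rw [sq, ← mul_assoc, hMc, one_mul]
    have hMc3 : M / 2 * (c ^ 2 * ‖u‖ ^ 2) = c / 2 * ‖u‖ ^ 2 := by
      rw [show M / 2 * (c ^ 2 * ‖u‖ ^ 2) = M * c ^ 2 * ‖u‖ ^ 2 / 2 by ring, hMc2]
      ring
    rw [hMc3] at l2
    nlinarith [l1, l2, e5]
  intro x y
  have h1 := claim x y
  have h2 := claim y x
  have e6 : (inner ℝ (G y) (x - y) : ℝ) = -inner ℝ (G y) (y - x) := by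
    rw [← inner_neg_right]; congr 1; abel
  have e7 : (inner ℝ (G x) (y - x) : ℝ) - inner ℝ (G y) (y - x)
      = -inner ℝ (G x - G y) (x - y) := by
    rw [← inner_sub_left, ← inner_neg_right]
    congr 1
    abel
  have e8 : ‖G y - G x‖ = ‖G x - G y‖ := norm_sub_rev _ _
  rw [e6] at h2
  rw [e8] at h1
  have key : c * ‖G x - G y‖ ^ 2 ≤ inner ℝ (G x - G y) (x - y) := by nlinarith
  calc ‖G x - G y‖ ^ 2 = M * (c * ‖G x - G y‖ ^ 2) := by
        rw [← mul_assoc, hMc, one_mul]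
    _ ≤ M * inner ℝ (G x - G y) (x - y) := by
        exact mul_le_mul_of_nonneg_left key hM.le

end Aux

set_option maxHeartbeats 1000000 in
/-- One gradient-descent step on a `λ`-strongly convex and `L`-smooth function
contracts the distance to the stationary point `xstar` by a factor `1 - η * λ`. -/
theorem gradient_descent_step_contraction
    {E : Type*} [NormedAddCommGroup E] [InnerProductSpace ℝ E] [FiniteDimensional ℝ E]
    (f : E → ℝ) (lam L η : ℝ)
    (hdiff : Differentiable ℝ f)
    (hlam : 0 < lam) (hlamL : lam ≤ L)
    (hsc : ∀ x y : E, f y ≥ f x + inner ℝ (gradient f x) (y - x) + (lam / 2) * ‖y - x‖ ^ 2)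
    (hsmooth : ∀ x y : E, ‖gradient f x - gradient f y‖ ≤ L * ‖x - y‖)
    (xstar : E) (hstar : gradient f xstar = 0)
    (hη : 0 < η) (hηL : η < 1 / L) :
    ∀ x : E, ‖x - η • gradient f x - xstar‖ ≤ (1 - η * lam) * ‖x - xstar‖ := by
  intro x
  have hL : 0 < L := lt_of_lt_of_le hlam hlamL
  have hηL' : η * L < 1 := by
    rw [lt_div_iff₀ hL] at hηL; exact hηL
  set g := gradient f x with hg
  set d := x - xstar with hdd
  set a := ‖d‖ with ha
  have ha0 : 0 ≤ a := norm_nonneg d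
  -- strong monotonicity at (x, xstar)
  have h_mono : lam * a ^ 2 ≤ inner ℝ g d := by
    have h1 := hsc x xstar
    have h2 := hsc xstar x
    rw [hstar] at h2
    simp only [inner_zero_left] at h2
    have e1 : ‖xstar - x‖ = a := by rw [ha, hdd, norm_sub_rev]
    have e2 : (inner ℝ g (xstar - x) : ℝ) = -inner ℝ g d := by
      rw [← inner_neg_right]; congr 1; rw [hdd]; abel
    rw [e1, e2] at h1
    have e3 : ‖x - xstar‖ = a := rfl
    rw [e3] at h2
    linarith
  have h_CS : (inner ℝ g d : ℝ) ≤ ‖g‖ * a := real_inner_le_norm g d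
  have h_Lip : ‖g‖ ≤ L * a := by
    have := hsmooth x xstar
    rw [hstar, sub_zero] at this
    exact this
  -- interpolation inequality : ‖g - lam•d‖² ≤ (L - lam) * (⟪g,d⟫ - lam a²)
  have hexp : ‖g - lam • d‖ ^ 2 = ‖g‖ ^ 2 - 2 * lam * inner ℝ g d + lam ^ 2 * a ^ 2 := by
    rw [norm_sub_sq_real, real_inner_smul_right, norm_smul, Real.norm_eq_abs,
      abs_of_pos hlam, mul_pow]
    ring
  have h_interp : ‖g - lam • d‖ ^ 2 ≤ (L - lam) * ((inner ℝ g d : ℝ) - lam * a ^ 2) := by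
    rcases eq_or_lt_of_le hlamL with heq | hlt
    · -- lam = L : LHS is forced to be ≤ 0
      subst heq
      rw [hexp]
      nlinarith [mul_le_mul h_Lip h_Lip (norm_nonneg g) (mul_nonneg hlam.le ha0),
        mul_le_mul_of_nonneg_left h_mono hlam.le]
    · -- lam < L : use co-coercivity of f - lam/2‖·‖²
      set φ : E → ℝ := fun z => f z - lam / 2 * ‖z‖ ^ 2 with hφ
      set G : E → E := fun z => gradient f z - lam • z with hG
      have halg : ∀ u v : E, (lam / 2) * ‖v - u‖ ^ 2 - lam / 2 * ‖v‖ ^ 2 + lam / 2 * ‖u‖ ^ 2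
          = -(lam * inner ℝ u (v - u)) := by
        intro u v
        rw [norm_sub_sq_real, inner_sub_right, real_inner_self_eq_norm_sq,
          real_inner_comm u v]
        ring
      have hGinner : ∀ u v : E, (inner ℝ (G u) (v - u) : ℝ)
          = inner ℝ (gradient f u) (v - u) - lam * inner ℝ u (v - u) := by
        intro u v
        rw [hG]
        simp only
        rw [inner_sub_left, real_inner_smul_left]
      have hlow : ∀ u v : E, φ u + inner ℝ (G u) (v - u) ≤ φ v := by
        intro u v
        have := hsc u v
        have h := halg u v
        rw [hGinner]
        simp only [hφ]
        linarith
      have hup : ∀ u v : E, φ v ≤ φ u + inner ℝ (G u) (v - u) + (L - lam) / 2 * ‖v - u‖ ^ 2 := by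
        intro u v
        have := gd_descent_lemma f L hdiff hsmooth u v
        have h := halg u v
        rw [hGinner]
        simp only [hφ]
        nlinarith
      have hco := gd_cocoercive φ G (L - lam) (by linarith) hlow hup x xstar
      have eG : G x - G xstar = g - lam • d := by
        rw [hG]
        simp only
        rw [hstar, hdd, smul_sub]
        abel
      have eI : (inner ℝ (G x - G xstar) (x - xstar) : ℝ) = inner ℝ g d - lam * a ^ 2 := by
        rw [eG, ← hdd, inner_sub_left, real_inner_smul_left, real_inner_self_eq_norm_sq, ← ha]
      rw [eI] at hco
      rw [eG] at hco
      exact hco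
  -- assemble
  have hgsq : ‖g‖ ^ 2 ≤ (L + lam) * inner ℝ g d - lam * L * a ^ 2 := by
    nlinarith [h_interp, hexp]
  have hstep : x - η • g - xstar = d - η • g := by rw [hdd]; abel
  clear_value a
  clear_value d
  clear_value g
  rw [hstep]
  have h1mηlam : 0 < 1 - η * lam := by nlinarith
  have hrhs0 : 0 ≤ (1 - η * lam) * a := mul_nonneg h1mηlam.le ha0
  have hsq : ‖d - η • g‖ ^ 2 ≤ ((1 - η * lam) * a) ^ 2 := by
    have hexp2 : ‖d - η • g‖ ^ 2 = a ^ 2 - 2 * η * inner ℝ g d + η ^ 2 * ‖g‖ ^ 2 := by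
      rw [norm_sub_sq_real, real_inner_smul_right, norm_smul, Real.norm_eq_abs,
        abs_of_pos hη, mul_pow, real_inner_comm, ← ha]
      ring
    rw [hexp2]
    have h2η : 0 ≤ 2 - η * (L + lam) := by nlinarith
    nlinarith [mul_le_mul_of_nonneg_left hgsq (sq_nonneg η),
      mul_nonneg (mul_nonneg hη.le h2η) (sub_nonneg.mpr h_mono)]
  calc ‖d - η • g‖ = √(‖d - η • g‖ ^ 2) := by rw [Real.sqrt_sq (norm_nonneg _)]
    _ ≤ √(((1 - η * lam) * a) ^ 2) := Real.sqrt_le_sqrt hsq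
    _ = (1 - η * lam) * a := Real.sqrt_sq hrhs0
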